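/- Let n ≥ 1, δ ∈ (0,1), ε ∈ (0,1), and let V_1,…,V_n be independent random variables, each uniformly distributed on [0,1]. Then P( Σ_{t=1}^n S_ε(V_t) ≥ √(2 n log(1/ε) log(1/δ)) + (3/2)·log(1/δ)/√ε ) ≤ δ. In particular, the exact critical value τ_⋆ satisfying P(Σ_{t=1}^n S_ε(V_t) ≥ τ_⋆) = δ obeys τ_⋆ ≤ √(2 n log(1/ε) log(1/δ)) + (3/2)·log(1/δ)/√ε. -/

import Mathlib

open MeasureTheory ProbabilityTheory

/-- The statistic `S_ε(u) = min(1/√ε, 1/√(1−u)) − (2 − √ε)` for `u ∈ [0,1)`,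
extended by the value `1/√ε − (2 − √ε)` at `u ≥ 1`. -/
noncomputable def Sstat (ε u : ℝ) : ℝ :=
  (if u < 1 then min (Real.sqrt ε)⁻¹ (Real.sqrt (1 - u))⁻¹ else (Real.sqrt ε)⁻¹)
    - (2 - Real.sqrt ε)

section Aux

open Real Set

/- ### pointwise exponential bounds -/

lemma NC.exp_quad_neg {y : ℝ} (hy : y ≤ 0) : Real.exp y ≤ 1 + y + y^2/2 := by
  have h : Antitone (fun y : ℝ => 1 + y + y^2/2 - Real.exp y) := by
    apply antitone_of_deriv_nonpos
    · fun_prop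
    · intro t
      have H : HasDerivAt (fun y : ℝ => 1 + y + y^2/2 - Real.exp y)
          (1 + (2 * t^1)/2 - Real.exp t) t := by
        exact (((hasDerivAt_id t).const_add 1).add ((hasDerivAt_pow 2 t).div_const 2)).sub
          (Real.hasDerivAt_exp t) |>.congr_deriv (by norm_num)
      rw [H.deriv]
      have := Real.add_one_le_exp t
      nlinarith
  have := h hy
  simp only [Real.exp_zero] at this
  nlinarith [this]

lemma NC.exp_sub_one_le {y : ℝ} (hy : 0 ≤ y) : Real.exp y - 1 ≤ y * Real.exp y := by
  have h : MonotoneOn (fun y : ℝ => 1 + y * Real.exp y - Real.exp y) (Set.Ici 0) := by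
    apply monotoneOn_of_deriv_nonneg (convex_Ici 0)
    · fun_prop
    · fun_prop
    · intro t ht
      have H : HasDerivAt (fun y : ℝ => 1 + y * Real.exp y - Real.exp y)
          (t * Real.exp t) t := by
        exact (((hasDerivAt_id t).mul (Real.hasDerivAt_exp t)).const_add 1).sub
          (Real.hasDerivAt_exp t) |>.congr_deriv (by simp only [id_eq]; ring)
      rw [H.deriv]
      simp only [interior_Ici, Set.mem_Ioi] at ht
      positivity
  have := h (Set.self_mem_Ici) (Set.mem_Ici.2 hy) hy
  simp only [Real.exp_zero] at this
  nlinarith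

lemma NC.exp_quad_pos {y : ℝ} (hy : 0 ≤ y) : Real.exp y ≤ 1 + y + y^2/2 * Real.exp y := by
  have h : MonotoneOn (fun y : ℝ => 1 + y + y^2/2 * Real.exp y - Real.exp y) (Set.Ici 0) := by
    apply monotoneOn_of_deriv_nonneg (convex_Ici 0)
    · fun_prop
    · fun_prop
    · intro t ht
      simp only [interior_Ici, Set.mem_Ioi] at ht
      have H : HasDerivAt (fun y : ℝ => 1 + y + y^2/2 * Real.exp y - Real.exp y)
          (1 + (t * Real.exp t + t^2/2 * Real.exp t) - Real.exp t) t := by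
        exact (((hasDerivAt_id t).const_add 1).add
          (((hasDerivAt_pow 2 t).div_const 2).mul (Real.hasDerivAt_exp t))).sub
          (Real.hasDerivAt_exp t) |>.congr_deriv (by ring)
      rw [H.deriv]
      have h1 := NC.exp_sub_one_le ht.le
      nlinarith [Real.exp_pos t, sq_nonneg t]
  have := h (Set.self_mem_Ici) (Set.mem_Ici.2 hy) hy
  simp only [Real.exp_zero] at this
  nlinarith

lemma NC.exp_quad {y c : ℝ} (hyc : y ≤ c) (hc : 0 ≤ c) :
    Real.exp y ≤ 1 + y + y^2/2 * Real.exp c := by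
  rcases le_or_gt y 0 with hy | hy
  · have h1 := NC.exp_quad_neg hy
    have h2 : (1:ℝ) ≤ Real.exp c := Real.one_le_exp hc
    nlinarith [sq_nonneg y]
  · have h1 := NC.exp_quad_pos hy.le
    have h2 : Real.exp y ≤ Real.exp c := Real.exp_le_exp.2 hyc
    nlinarith [sq_nonneg y]

/- ### properties of `Sstat` -/

lemma NC.Sstat_measurable (ε : ℝ) : Measurable (Sstat ε) := by
  unfold Sstat
  apply Measurable.sub _ measurable_const
  exact Measurable.ite (measurableSet_lt measurable_id measurable_const)
    (measurable_const.min (((measurable_const.sub measurable_id).sqrt).inv))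
    measurable_const

lemma NC.Sstat_le {ε : ℝ} (hε : ε ∈ Set.Ioo (0:ℝ) 1) (u : ℝ) :
    Sstat ε u ≤ (Real.sqrt ε)⁻¹ := by
  have h1 : Real.sqrt ε ≤ 1 := by
    rw [show (1:ℝ) = Real.sqrt 1 by simp]
    exact Real.sqrt_le_sqrt hε.2.le
  unfold Sstat
  have : (if u < 1 then min (Real.sqrt ε)⁻¹ (Real.sqrt (1 - u))⁻¹ else (Real.sqrt ε)⁻¹)
      ≤ (Real.sqrt ε)⁻¹ := by
    split
    · exact min_le_left _ _
    · exact le_refl _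
  linarith

lemma NC.Sstat_abs_le {ε : ℝ} (hε : ε ∈ Set.Ioo (0:ℝ) 1) (u : ℝ) :
    |Sstat ε u| ≤ (Real.sqrt ε)⁻¹ := by
  have hs : 0 < Real.sqrt ε := Real.sqrt_pos.2 hε.1
  have h1 : Real.sqrt ε ≤ 1 := by
    rw [show (1:ℝ) = Real.sqrt 1 by simp]
    exact Real.sqrt_le_sqrt hε.2.le
  rw [abs_le]
  constructor
  · have hbr : 0 ≤ (if u < 1 then min (Real.sqrt ε)⁻¹ (Real.sqrt (1 - u))⁻¹
        else (Real.sqrt ε)⁻¹) := by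
      split
      · exact le_min (by positivity) (by positivity)
      · positivity
    have key : 2 - Real.sqrt ε ≤ (Real.sqrt ε)⁻¹ := by
      rw [inv_eq_one_div, le_div_iff₀ hs]
      nlinarith [sq_nonneg (1 - Real.sqrt ε)]
    unfold Sstat
    linarith
  · exact NC.Sstat_le hε u

/- ### integrals against the uniform distribution -/

lemma NC.int_of_bdd {f : ℝ → ℝ} (hm : Measurable f) {C : ℝ} (hb : ∀ u, |f u| ≤ C) :
    Integrable f (volume.restrict (Icc (0:ℝ) 1)) := by
  have : IntegrableOn f (Icc (0:ℝ) 1) volume := by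
    apply Measure.integrableOn_of_bounded (M := C)
    · simp [Real.volume_Icc]
    · exact hm.aestronglyMeasurable
    · exact ae_of_all _ (fun u => by simpa using hb u)
  exact this

lemma NC.intInt_of_bdd {f : ℝ → ℝ} (hm : Measurable f) {C : ℝ} (hb : ∀ u, |f u| ≤ C)
    (a b : ℝ) : IntervalIntegrable f volume a b := by
  rw [intervalIntegrable_iff]
  apply Measure.integrableOn_of_bounded (M := C)
  · exact ne_of_lt (measure_Ioc_lt_top)
  · exact hm.aestronglyMeasurable
  · exact ae_of_all _ (fun u => by simpa using hb u)

lemma NC.M_meas (ε : ℝ) : Measurable (fun u : ℝ => min (Real.sqrt ε)⁻¹ (Real.sqrt (1-u))⁻¹) :=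
  measurable_const.min (((measurable_const.sub measurable_id).sqrt).inv)

lemma NC.M_nonneg (ε u : ℝ) : 0 ≤ min (Real.sqrt ε)⁻¹ (Real.sqrt (1-u))⁻¹ :=
  le_min (by positivity) (by positivity)

lemma NC.M_le (ε u : ℝ) : min (Real.sqrt ε)⁻¹ (Real.sqrt (1-u))⁻¹ ≤ (Real.sqrt ε)⁻¹ :=
  min_le_left _ _

lemma NC.M_abs_le (ε u : ℝ) : |min (Real.sqrt ε)⁻¹ (Real.sqrt (1-u))⁻¹| ≤ (Real.sqrt ε)⁻¹ := by
  rw [abs_of_nonneg (NC.M_nonneg ε u)]; exact NC.M_le ε u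

lemma NC.uniform_int_M {ε : ℝ} (hε : ε ∈ Set.Ioo (0:ℝ) 1) :
    ∫ u in Icc (0:ℝ) 1, min (Real.sqrt ε)⁻¹ (Real.sqrt (1-u))⁻¹ = 2 - Real.sqrt ε := by
  have hε0 := hε.1
  have hε1 := hε.2
  have hs : 0 < Real.sqrt ε := Real.sqrt_pos.2 hε0
  have hii := NC.intInt_of_bdd (NC.M_meas ε) (NC.M_abs_le ε)
  rw [MeasureTheory.integral_Icc_eq_integral_Ioc,
    ← intervalIntegral.integral_of_le (zero_le_one),
    ← intervalIntegral.integral_add_adjacent_intervals (hii 0 (1-ε)) (hii (1-ε) 1)]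
  have h1 : ∫ u in (0:ℝ)..(1-ε), min (Real.sqrt ε)⁻¹ (Real.sqrt (1-u))⁻¹
      = 2 - 2 * Real.sqrt ε := by
    have : ∫ u in (0:ℝ)..(1-ε), min (Real.sqrt ε)⁻¹ (Real.sqrt (1-u))⁻¹
        = ∫ u in (0:ℝ)..(1-ε), (Real.sqrt (1-u))⁻¹ := by
      apply intervalIntegral.integral_congr
      intro u hu
      rw [Set.uIcc_of_le (by linarith)] at hu
      have : ε ≤ 1 - u := by have := hu.2; linarith
      exact min_eq_right (by
        apply inv_anti₀ hs
        exact Real.sqrt_le_sqrt this)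
    rw [this, intervalIntegral.integral_comp_sub_left (fun t => (Real.sqrt t)⁻¹) 1]
    norm_num
    have : ∫ t in ε..1, (Real.sqrt t)⁻¹ = ∫ t in ε..1, t ^ (-(1/2) : ℝ) := by
      apply intervalIntegral.integral_congr
      intro t ht
      rw [Set.uIcc_of_le (by linarith)] at ht
      have ht0 : 0 ≤ t := le_trans hε0.le ht.1
      show (Real.sqrt t)⁻¹ = t ^ (-(1/2) : ℝ)
      rw [Real.rpow_neg ht0, ← Real.sqrt_eq_rpow]
    rw [this, integral_rpow (Or.inl (by norm_num))]
    norm_num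
    rw [← Real.sqrt_eq_rpow]
    ring
  have h2 : ∫ u in (1-ε)..1, min (Real.sqrt ε)⁻¹ (Real.sqrt (1-u))⁻¹ = Real.sqrt ε := by
    have hne : ∀ᵐ u : ℝ, u ≠ 1 := by
      rw [ae_iff]
      have h : {a : ℝ | ¬a ≠ 1} = {1} := by ext a; simp
      rw [h]
      exact measure_singleton 1
    have : ∫ u in (1-ε)..1, min (Real.sqrt ε)⁻¹ (Real.sqrt (1-u))⁻¹
        = ∫ u in (1-ε)..1, (Real.sqrt ε)⁻¹ := by
      apply intervalIntegral.integral_congr_ae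
      filter_upwards [hne] with u hu hmem
      rw [Set.uIoc_of_le (by linarith)] at hmem
      have h1u : 0 < 1 - u := by
        have := hmem.2
        cases lt_or_eq_of_le this with
        | inl h => linarith
        | inr h => exact absurd h hu
      have h2u : 1 - u ≤ ε := by have := hmem.1; linarith
      exact min_eq_left (by
        apply inv_anti₀ (Real.sqrt_pos.2 h1u)
        exact Real.sqrt_le_sqrt h2u)
    rw [this, intervalIntegral.integral_const]
    have : (1 - (1-ε)) = ε := by ring
    rw [this, smul_eq_mul]
    rw [← Real.mul_self_sqrt hε0.le]
    field_simp
    rw [Real.sqrt_sq hs.le]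
  rw [h1, h2]; ring

lemma NC.uniform_int_M2 {ε : ℝ} (hε : ε ∈ Set.Ioo (0:ℝ) 1) :
    ∫ u in Icc (0:ℝ) 1, (min (Real.sqrt ε)⁻¹ (Real.sqrt (1-u))⁻¹)^2
      = Real.log (1/ε) + 1 := by
  have hε0 := hε.1
  have hε1 := hε.2
  have hs : 0 < Real.sqrt ε := Real.sqrt_pos.2 hε0
  have hmeas : Measurable (fun u : ℝ => (min (Real.sqrt ε)⁻¹ (Real.sqrt (1-u))⁻¹)^2) :=
    (NC.M_meas ε).pow_const 2
  have habs : ∀ u, |(min (Real.sqrt ε)⁻¹ (Real.sqrt (1-u))⁻¹)^2| ≤ ((Real.sqrt ε)⁻¹)^2 := by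
    intro u
    rw [abs_of_nonneg (by positivity)]
    exact pow_le_pow_left₀ (NC.M_nonneg ε u) (NC.M_le ε u) 2
  have hii := NC.intInt_of_bdd hmeas habs
  rw [MeasureTheory.integral_Icc_eq_integral_Ioc,
    ← intervalIntegral.integral_of_le (zero_le_one),
    ← intervalIntegral.integral_add_adjacent_intervals (hii 0 (1-ε)) (hii (1-ε) 1)]
  have h1 : ∫ u in (0:ℝ)..(1-ε), (min (Real.sqrt ε)⁻¹ (Real.sqrt (1-u))⁻¹)^2
      = Real.log (1/ε) := by
    have : ∫ u in (0:ℝ)..(1-ε), (min (Real.sqrt ε)⁻¹ (Real.sqrt (1-u))⁻¹)^2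
        = ∫ u in (0:ℝ)..(1-ε), ((Real.sqrt (1-u))⁻¹)^2 := by
      apply intervalIntegral.integral_congr
      intro u hu
      rw [Set.uIcc_of_le (by linarith)] at hu
      have : ε ≤ 1 - u := by have := hu.2; linarith
      show (min (Real.sqrt ε)⁻¹ (Real.sqrt (1-u))⁻¹)^2 = ((Real.sqrt (1-u))⁻¹)^2
      rw [min_eq_right (by
        apply inv_anti₀ hs
        exact Real.sqrt_le_sqrt this)]
    rw [this,
      intervalIntegral.integral_comp_sub_left (fun t => ((Real.sqrt t)⁻¹)^2) 1]
    norm_num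
    have : ∫ t in ε..1, ((Real.sqrt t)^2)⁻¹ = ∫ t in ε..1, t⁻¹ := by
      apply intervalIntegral.integral_congr
      intro t ht
      rw [Set.uIcc_of_le (by linarith)] at ht
      have ht0 : 0 ≤ t := le_trans hε0.le ht.1
      show ((Real.sqrt t)^2)⁻¹ = t⁻¹
      rw [Real.sq_sqrt ht0]
    rw [this, integral_inv_of_pos hε0 one_pos]
    rw [one_div, Real.log_inv]
  have h2 : ∫ u in (1-ε)..1, (min (Real.sqrt ε)⁻¹ (Real.sqrt (1-u))⁻¹)^2 = 1 := by
    have hne : ∀ᵐ u : ℝ, u ≠ 1 := by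
      rw [ae_iff]
      have h : {a : ℝ | ¬a ≠ 1} = {1} := by ext a; simp
      rw [h]
      exact measure_singleton 1
    have : ∫ u in (1-ε)..1, (min (Real.sqrt ε)⁻¹ (Real.sqrt (1-u))⁻¹)^2
        = ∫ u in (1-ε)..1, ((Real.sqrt ε)⁻¹)^2 := by
      apply intervalIntegral.integral_congr_ae
      filter_upwards [hne] with u hu hmem
      rw [Set.uIoc_of_le (by linarith)] at hmem
      have h1u : 0 < 1 - u := by
        have := hmem.2
        cases lt_or_eq_of_le this with
        | inl h => linarith
        | inr h => exact absurd h hu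
      have h2u : 1 - u ≤ ε := by have := hmem.1; linarith
      rw [min_eq_left (by
        apply inv_anti₀ (Real.sqrt_pos.2 h1u)
        exact Real.sqrt_le_sqrt h2u)]
    rw [this, intervalIntegral.integral_const]
    have he : (1 - (1-ε)) = ε := by ring
    rw [he, smul_eq_mul, inv_pow, Real.sq_sqrt hε0.le]
    field_simp
  rw [h1, h2]

instance NC.unif_prob : IsProbabilityMeasure (volume.restrict (Icc (0:ℝ) 1)) := by
  constructor
  rw [Measure.restrict_apply_univ, Real.volume_Icc]
  norm_num

lemma NC.Sstat_ae_eq (ε : ℝ) :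
    Sstat ε =ᵐ[volume.restrict (Icc (0:ℝ) 1)]
      fun u => min (Real.sqrt ε)⁻¹ (Real.sqrt (1-u))⁻¹ - (2 - Real.sqrt ε) := by
  have hne : ∀ᵐ u ∂(volume.restrict (Icc (0:ℝ) 1)), u ≠ 1 := by
    rw [ae_iff]
    have h : {a : ℝ | ¬a ≠ 1} = {1} := by ext a; simp
    rw [h]
    exact le_antisymm (le_trans (Measure.restrict_apply_le _ _) (by simp)) (zero_le)
  filter_upwards [hne, ae_restrict_mem measurableSet_Icc] with u hu hmem
  unfold Sstat
  rw [if_pos (lt_of_le_of_ne hmem.2 hu)]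

lemma NC.int_Sstat {ε : ℝ} (hε : ε ∈ Set.Ioo (0:ℝ) 1) :
    ∫ u in Icc (0:ℝ) 1, Sstat ε u = 0 := by
  rw [integral_congr_ae (NC.Sstat_ae_eq ε)]
  rw [integral_sub (NC.int_of_bdd (NC.M_meas ε) (NC.M_abs_le ε)) (integrable_const _)]
  rw [NC.uniform_int_M hε, integral_const]
  simp

lemma NC.int_Sstat_sq {ε : ℝ} (hε : ε ∈ Set.Ioo (0:ℝ) 1) :
    ∫ u in Icc (0:ℝ) 1, (Sstat ε u)^2 ≤ Real.log (1/ε) := by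
  have hsq : (fun u => (Sstat ε u)^2) =ᵐ[volume.restrict (Icc (0:ℝ) 1)]
      fun u => (min (Real.sqrt ε)⁻¹ (Real.sqrt (1-u))⁻¹)^2
        - 2 * (2 - Real.sqrt ε) * min (Real.sqrt ε)⁻¹ (Real.sqrt (1-u))⁻¹
        + (2 - Real.sqrt ε)^2 := by
    filter_upwards [NC.Sstat_ae_eq ε] with u hu
    rw [hu]
    ring
  rw [integral_congr_ae hsq]
  have hM := NC.int_of_bdd (NC.M_meas ε) (NC.M_abs_le ε)
  have hM2 : Integrable (fun u => (min (Real.sqrt ε)⁻¹ (Real.sqrt (1-u))⁻¹)^2)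
      (volume.restrict (Icc (0:ℝ) 1)) := by
    apply NC.int_of_bdd ((NC.M_meas ε).pow_const 2) (C := ((Real.sqrt ε)⁻¹)^2)
    intro u
    rw [abs_pow]
    exact pow_le_pow_left₀ (abs_nonneg _) (NC.M_abs_le ε u) 2
  have hMc : Integrable (fun u => 2 * (2 - Real.sqrt ε) * min (Real.sqrt ε)⁻¹ (Real.sqrt (1-u))⁻¹)
      (volume.restrict (Icc (0:ℝ) 1)) := hM.const_mul _
  have hsub : Integrable (fun u => (min (Real.sqrt ε)⁻¹ (Real.sqrt (1-u))⁻¹)^2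
      - 2 * (2 - Real.sqrt ε) * min (Real.sqrt ε)⁻¹ (Real.sqrt (1-u))⁻¹)
      (volume.restrict (Icc (0:ℝ) 1)) := hM2.sub hMc
  rw [integral_add hsub (integrable_const _),
    integral_sub hM2 hMc, MeasureTheory.integral_const_mul,
    NC.uniform_int_M2 hε, NC.uniform_int_M hε, integral_const]
  simp only [measure_univ, probReal_univ, ENNReal.toReal_one, one_smul, smul_eq_mul, one_mul]
  have h1 : Real.sqrt ε ≤ 1 := by
    rw [show (1:ℝ) = Real.sqrt 1 by simp]
    exact Real.sqrt_le_sqrt hε.2.le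
  have h0 : 0 ≤ Real.sqrt ε := Real.sqrt_nonneg ε
  nlinarith

end Aux

set_option maxHeartbeats 2000000 in
/-- If `V_1,…,V_n` are i.i.d. uniform on `[0,1]`, then
`P(∑_t S_ε(V_t) ≥ √(2 n log(1/ε) log(1/δ)) + (3/2) log(1/δ)/√ε) ≤ δ`; in
particular any exact critical value `τ⋆` with
`P(∑_t S_ε(V_t) ≥ τ⋆) = δ` satisfies `τ⋆ ≤ √(2 n log(1/ε) log(1/δ)) + (3/2) log(1/δ)/√ε`. -/
theorem null_concentration {n : ℕ} (hn : 1 ≤ n) (δ ε : ℝ)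
    (hδ : δ ∈ Set.Ioo (0:ℝ) 1) (hε : ε ∈ Set.Ioo (0:ℝ) 1)
    {Ω : Type*} [MeasurableSpace Ω] (μ : Measure Ω) [IsProbabilityMeasure μ]
    (V : Fin n → Ω → ℝ) (hV_meas : ∀ t, Measurable (V t))
    (hV_indep : iIndepFun V μ)
    (hV_unif : ∀ t, Measure.map (V t) μ = volume.restrict (Set.Icc (0:ℝ) 1)) :
    μ {ω | Real.sqrt (2 * n * Real.log (1/ε) * Real.log (1/δ))
            + (3/2) * Real.log (1/δ) / Real.sqrt ε ≤ ∑ t, Sstat ε (V t ω)}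
        ≤ ENNReal.ofReal δ ∧
    ∀ τ : ℝ, μ {ω | τ ≤ ∑ t, Sstat ε (V t ω)} = ENNReal.ofReal δ →
      τ ≤ Real.sqrt (2 * n * Real.log (1/ε) * Real.log (1/δ))
            + (3/2) * Real.log (1/δ) / Real.sqrt ε := by
  obtain ⟨hδ0, hδ1⟩ := hδ
  obtain ⟨hε0, hε1⟩ := hε
  have hεIoo : ε ∈ Set.Ioo (0:ℝ) 1 := ⟨hε0, hε1⟩
  have hsε : 0 < Real.sqrt ε := Real.sqrt_pos.2 hε0
  set b : ℝ := (Real.sqrt ε)⁻¹ with hb_def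
  set L : ℝ := Real.log (1/ε) with hL_def
  set x : ℝ := Real.log (1/δ) with hx_def
  set v : ℝ := (n:ℝ) * L with hv_def
  have hb : 0 < b := by rw [hb_def]; positivity
  have hL : 0 < L := by
    rw [hL_def]; exact Real.log_pos (by rw [lt_div_iff₀ hε0]; linarith)
  have hx : 0 < x := by
    rw [hx_def]; exact Real.log_pos (by rw [lt_div_iff₀ hδ0]; linarith)
  have hnpos : (0:ℝ) < n := by exact_mod_cast hn
  have hv : 0 < v := by rw [hv_def]; exact mul_pos hnpos hL
  set s : ℝ := Real.sqrt (2*x/v) with hs_def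
  have hs : 0 < s := by
    rw [hs_def]; exact Real.sqrt_pos.2 (div_pos (by linarith) hv)
  set lam : ℝ := s / (1 + b*s) with hlam_def
  have hbs : 0 < b * s := mul_pos hb hs
  have h1bs : 0 < 1 + b * s := by linarith
  have hlam : 0 < lam := by rw [hlam_def]; exact div_pos hs h1bs
  have hs2 : s^2 = 2*x/v := by
    rw [hs_def]; exact Real.sq_sqrt (le_of_lt (div_pos (by linarith) hv))
  have hs2v : s^2 * v = 2*x := by rw [hs2]; field_simp
  have hlamq : lam * (1 + b*s) = s := by
    rw [hlam_def, div_mul_cancel₀ _ (ne_of_gt h1bs)]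
  set T : ℝ := Real.sqrt (2 * n * L * x) + (3/2) * x / Real.sqrt ε with hT_def
  set w : ℝ := lam^2 * (1 + b*s) / 2 * L with hw_def
  clear_value b L x v s lam T w
  have hsv : Real.sqrt (2 * (n:ℝ) * L * x) = s * v := by
    have h : 2 * (n:ℝ) * L * x = (s*v)^2 := by
      rw [mul_pow, hs2, hv_def]
      field_simp
    rw [h, Real.sqrt_sq (by positivity)]
  have hT_eq : T = s * v + (3/2) * x * b := by
    rw [hT_def, hsv, hb_def, div_eq_mul_inv]
  have hlamb_lt : lam * b < 1 := by
    have h : lam * b = b * s / (1 + b*s) := by rw [hlam_def]; ring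
    rw [h, div_lt_one h1bs]; linarith
  have hlamb_pos : 0 < lam * b := mul_pos hlam hb
  have hexp_lb : Real.exp (lam*b) ≤ 1 + b*s := by
    have h1 : (0:ℝ) < 1 - lam * b := by linarith
    have h2 := Real.add_one_le_exp (-(lam*b))
    rw [Real.exp_neg] at h2
    have h3 : Real.exp (lam*b) ≤ (1 - lam*b)⁻¹ := by
      rw [inv_eq_one_div, le_div_iff₀ h1]
      have hinv : (Real.exp (lam*b))⁻¹ * Real.exp (lam*b) = 1 :=
        inv_mul_cancel₀ (Real.exp_ne_zero _)
      nlinarith [Real.exp_pos (lam*b)]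
    have h4 : (1 - lam*b)⁻¹ = 1 + b*s := by
      have h5 : 1 - lam * b = (1 + b*s)⁻¹ := by
        rw [hlam_def]
        field_simp
        ring
      rw [h5, inv_inv]
    rw [← h4]; exact h3
  have hw_nonneg : 0 ≤ lam^2 * (1 + b*s) / 2 :=
    div_nonneg (mul_nonneg (sq_nonneg lam) h1bs.le) (by norm_num)
  -- per-variable mgf bound
  have hmgf_single : ∀ i : Fin n,
      mgf (fun ω => Sstat ε (V i ω)) μ lam ≤ Real.exp w := by
    intro i
    have hSmeas : Measurable (Sstat ε) := NC.Sstat_measurable ε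
    have hgmeas : Measurable (fun u => Real.exp (lam * Sstat ε u)) :=
      (hSmeas.const_mul lam).exp
    have htrans : mgf (fun ω => Sstat ε (V i ω)) μ lam
        = ∫ u in Set.Icc (0:ℝ) 1, Real.exp (lam * Sstat ε u) := by
      unfold mgf
      rw [← hV_unif i,
        integral_map (hV_meas i).aemeasurable hgmeas.aestronglyMeasurable]
    rw [htrans]
    have hIexp : Integrable (fun u => Real.exp (lam * Sstat ε u))
        (volume.restrict (Set.Icc (0:ℝ) 1)) := by
      apply NC.int_of_bdd hgmeas (C := Real.exp (lam * b))
      intro u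
      rw [abs_of_pos (Real.exp_pos _)]
      apply Real.exp_le_exp.2
      apply mul_le_mul_of_nonneg_left _ hlam.le
      rw [hb_def]
      exact NC.Sstat_le hεIoo u
    have hIS : Integrable (Sstat ε) (volume.restrict (Set.Icc (0:ℝ) 1)) :=
      NC.int_of_bdd hSmeas (NC.Sstat_abs_le hεIoo)
    have hIS2 : Integrable (fun u => (Sstat ε u)^2) (volume.restrict (Set.Icc (0:ℝ) 1)) := by
      apply NC.int_of_bdd (hSmeas.pow_const 2) (C := ((Real.sqrt ε)⁻¹)^2)
      intro u
      rw [abs_pow]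
      exact pow_le_pow_left₀ (abs_nonneg _) (NC.Sstat_abs_le hεIoo u) 2
    have hpt : ∀ u, Real.exp (lam * Sstat ε u)
        ≤ 1 + lam * Sstat ε u + (lam^2 * Real.exp (lam*b) / 2) * (Sstat ε u)^2 := by
      intro u
      have hSb : lam * Sstat ε u ≤ lam * b := by
        apply mul_le_mul_of_nonneg_left _ hlam.le
        rw [hb_def]
        exact NC.Sstat_le hεIoo u
      have h := NC.exp_quad hSb (le_of_lt hlamb_pos)
      calc Real.exp (lam * Sstat ε u)
          ≤ 1 + lam * Sstat ε u + (lam * Sstat ε u)^2/2 * Real.exp (lam*b) := h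
        _ = 1 + lam * Sstat ε u + (lam^2 * Real.exp (lam*b) / 2) * (Sstat ε u)^2 := by ring
    have hIc : Integrable (fun u : ℝ => lam * Sstat ε u)
        (volume.restrict (Set.Icc (0:ℝ) 1)) := hIS.const_mul lam
    have hIa : Integrable (fun u : ℝ => 1 + lam * Sstat ε u)
        (volume.restrict (Set.Icc (0:ℝ) 1)) := (integrable_const 1).add hIc
    have hIb : Integrable (fun u : ℝ => (lam^2 * Real.exp (lam*b) / 2) * (Sstat ε u)^2)
        (volume.restrict (Set.Icc (0:ℝ) 1)) := hIS2.const_mul _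
    have hIRHS : Integrable
        (fun u => 1 + lam * Sstat ε u + (lam^2 * Real.exp (lam*b) / 2) * (Sstat ε u)^2)
        (volume.restrict (Set.Icc (0:ℝ) 1)) := hIa.add hIb
    calc ∫ u in Set.Icc (0:ℝ) 1, Real.exp (lam * Sstat ε u)
        ≤ ∫ u in Set.Icc (0:ℝ) 1,
            (1 + lam * Sstat ε u + (lam^2 * Real.exp (lam*b) / 2) * (Sstat ε u)^2) :=
          integral_mono hIexp hIRHS hpt
      _ = 1 + lam * (∫ u in Set.Icc (0:ℝ) 1, Sstat ε u)
            + (lam^2 * Real.exp (lam*b) / 2) * ∫ u in Set.Icc (0:ℝ) 1, (Sstat ε u)^2 := by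
          rw [integral_add hIa hIb, integral_add (integrable_const 1) hIc,
            MeasureTheory.integral_const_mul, MeasureTheory.integral_const_mul, integral_const]
          simp [measure_univ]
      _ ≤ 1 + w := by
          rw [NC.int_Sstat hεIoo, mul_zero, add_zero]
          have hS2pos : 0 ≤ ∫ u in Set.Icc (0:ℝ) 1, (Sstat ε u)^2 :=
            integral_nonneg (fun u => sq_nonneg _)
          have hS2le : ∫ u in Set.Icc (0:ℝ) 1, (Sstat ε u)^2 ≤ L := by
            rw [hL_def]; exact NC.int_Sstat_sq hεIoo
          have hcoef : lam^2 * Real.exp (lam*b) / 2 ≤ lam^2 * (1 + b*s) / 2 := by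
            nlinarith [sq_nonneg lam, hexp_lb]
          have hmul : (lam^2 * Real.exp (lam*b) / 2) * ∫ u in Set.Icc (0:ℝ) 1, (Sstat ε u)^2
              ≤ (lam^2 * (1 + b*s) / 2) * L :=
            mul_le_mul hcoef hS2le hS2pos hw_nonneg
          rw [hw_def]
          linarith
      _ ≤ Real.exp w := by
          have := Real.add_one_le_exp w
          linarith
  -- independence and measurability of the composed variables
  have hXmeas : ∀ i : Fin n, Measurable (fun ω => Sstat ε (V i ω)) :=
    fun i => (NC.Sstat_measurable ε).comp (hV_meas i)
  have hXindep : iIndepFun (fun i ω => Sstat ε (V i ω)) μ := by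
    have := hV_indep.comp (fun _ => Sstat ε) (fun _ => NC.Sstat_measurable ε)
    exact this
  -- mgf of the sum
  have hmgf_sum : mgf (fun ω => ∑ i, Sstat ε (V i ω)) μ lam ≤ Real.exp ((n:ℝ) * w) := by
    have h1 : (fun ω => ∑ i, Sstat ε (V i ω)) = ∑ i : Fin n, (fun ω => Sstat ε (V i ω)) := by
      funext ω
      rw [Finset.sum_apply]
    rw [h1, hXindep.mgf_sum hXmeas]
    calc ∏ i : Fin n, mgf (fun ω => Sstat ε (V i ω)) μ lam
        ≤ ∏ _i : Fin n, Real.exp w :=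
          Finset.prod_le_prod (fun i _ => mgf_nonneg) (fun i _ => hmgf_single i)
      _ = Real.exp ((n:ℝ) * w) := by
          rw [Finset.prod_const, Finset.card_univ, Fintype.card_fin, ← Real.exp_nat_mul]
  -- Chernoff bound
  have hsummeas : Measurable (fun ω => ∑ i, Sstat ε (V i ω)) :=
    Finset.measurable_sum _ (fun i _ => hXmeas i)
  have hint_sum : Integrable (fun ω => Real.exp (lam * ∑ i, Sstat ε (V i ω))) μ := by
    apply Integrable.mono' (integrable_const (Real.exp (lam * ((n:ℝ) * b))))
      ((hsummeas.const_mul lam).exp).aestronglyMeasurable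
    apply ae_of_all
    intro ω
    rw [Real.norm_eq_abs, abs_of_pos (Real.exp_pos _)]
    apply Real.exp_le_exp.2
    apply mul_le_mul_of_nonneg_left _ hlam.le
    calc ∑ i, Sstat ε (V i ω) ≤ ∑ _i : Fin n, b :=
          Finset.sum_le_sum (fun i _ => by rw [hb_def]; exact NC.Sstat_le hεIoo _)
      _ = (n:ℝ) * b := by
          rw [Finset.sum_const, Finset.card_univ, Fintype.card_fin, nsmul_eq_mul]
  have hcher := measure_ge_le_exp_mul_mgf (μ := μ)
    (X := fun ω => ∑ i, Sstat ε (V i ω)) T hlam.le hint_sum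
  -- arithmetic: n*w - lam*T < -x
  have harith : (n:ℝ) * w - lam * T < -x := by
    have h1 : ((n:ℝ) * w) * (1 + b*s) = x := by
      have e : (n:ℝ) * w * (1 + b*s) = (lam*(1+b*s))^2 / 2 * ((n:ℝ)*L) := by
        rw [hw_def]; ring
      rw [e, hlamq, ← hv_def]
      linear_combination hs2v / 2
    have h2 : (lam * T) * (1 + b*s) = 2*x + (3/2)*x*(b*s) := by
      have e : lam * T * (1 + b*s) = (lam*(1+b*s)) * T := by ring
      rw [e, hlamq, hT_eq]
      linear_combination hs2v
    have key : ((n:ℝ) * w - lam * T + x) * (1 + b*s) = -(1/2)*x*(b*s) := by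
      linear_combination h1 - h2
    nlinarith [mul_pos hx hbs, key, h1bs]
  -- final bound
  have hδexp : Real.exp (-x) = δ := by
    rw [hx_def, one_div, Real.log_inv, neg_neg, Real.exp_log hδ0]
  have hTR : (μ {ω | T ≤ ∑ i, Sstat ε (V i ω)}).toReal < δ := by
    calc (μ {ω | T ≤ ∑ i, Sstat ε (V i ω)}).toReal
        ≤ Real.exp (-lam * T) * mgf (fun ω => ∑ i, Sstat ε (V i ω)) μ lam := hcher
      _ ≤ Real.exp (-lam * T) * Real.exp ((n:ℝ) * w) :=
          mul_le_mul_of_nonneg_left hmgf_sum (le_of_lt (Real.exp_pos _))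
      _ = Real.exp ((n:ℝ) * w - lam * T) := by
          rw [← Real.exp_add]; ring_nf
      _ < Real.exp (-x) := Real.exp_lt_exp.2 harith
      _ = δ := hδexp
  have hfin : μ {ω | T ≤ ∑ i, Sstat ε (V i ω)} ≠ ⊤ := measure_ne_top μ _
  have hE1 : μ {ω | T ≤ ∑ i, Sstat ε (V i ω)} < ENNReal.ofReal δ := by
    rw [← ENNReal.ofReal_toReal hfin]
    exact (ENNReal.ofReal_lt_ofReal_iff hδ0).2 hTR
  constructor
  · exact le_of_lt hE1
  · intro τ hτ
    by_contra hcon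
    push_neg at hcon
    have hsub : {ω | τ ≤ ∑ i, Sstat ε (V i ω)} ⊆ {ω | T ≤ ∑ i, Sstat ε (V i ω)} :=
      fun ω hω => le_trans (le_of_lt hcon) hω
    have hmono := measure_mono (μ := μ) hsub
    rw [hτ] at hmono
    exact absurd (lt_of_le_of_lt hmono hE1) (lt_irrefl _)
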